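/- Under the hypotheses of the perturbed time-varying projected-gradient tracking iteration (strong monotonicity η, Lipschitz constant L, step size 0 < α < 2η/L², perturbation bound E ≥ 0, optimizer drift bound σ ≥ 0), the tracking error satisfies limsup_{k→∞} ‖z_k − z*_k‖ ≤ (αE + σ)/(1 − ρ), where ρ = √(1 − 2αη + α²L²). -/

import Mathlib

/-- `p` is a metric projection (nearest point) of `x` onto `Y`. -/
def IsProjOn {E : Type*} [NormedAddCommGroup E] (Y : Set E) (x p : E) : Prop :=
  p ∈ Y ∧ ∀ y ∈ Y, ‖x - p‖ ≤ ‖x - y‖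

section aux

variable {F : Type*} [NormedAddCommGroup F] [InnerProductSpace ℝ F]

lemma isProjOn_inner_le {Y : Set F} (hcv : Convex ℝ Y) {x p : F}
    (hp : IsProjOn Y x p) : ∀ w ∈ Y, (inner ℝ (x - p) (w - p) : ℝ) ≤ 0 := by
  have hmem := hp.1
  have heq : ‖x - p‖ = ⨅ w : Y, ‖x - w‖ := by
    haveI : Nonempty Y := ⟨⟨p, hmem⟩⟩
    refine le_antisymm (le_ciInf fun w => hp.2 w w.2) ?_
    exact ciInf_le ⟨0, fun _ ⟨_, h⟩ => h ▸ norm_nonneg _⟩ (⟨p, hmem⟩ : Y)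
  exact (norm_eq_iInf_iff_real_inner_le_zero hcv hmem).1 heq

lemma isProjOn_nonexpansive {Y : Set F} (hcv : Convex ℝ Y) {x y p q : F}
    (hp : IsProjOn Y x p) (hq : IsProjOn Y y q) : ‖p - q‖ ≤ ‖x - y‖ := by
  have h1 : (inner ℝ (x - p) (q - p) : ℝ) ≤ 0 := isProjOn_inner_le hcv hp q hq.1
  have h2 : (inner ℝ (y - q) (p - q) : ℝ) ≤ 0 := isProjOn_inner_le hcv hq p hp.1
  have hkey : ‖p - q‖ ^ 2 ≤ (inner ℝ (x - y) (p - q) : ℝ) := by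
    have hsum := add_nonpos h1 h2
    have hexp : (inner ℝ (x - p) (q - p) : ℝ) + (inner ℝ (y - q) (p - q) : ℝ)
        = - (inner ℝ (x - y) (p - q) : ℝ) + ‖p - q‖ ^ 2 := by
      have hqp : (q - p : F) = -(p - q) := by abel
      rw [hqp, inner_neg_right,
        show (x - p : F) = (x - y) - (p - q) + (y - q) by abel,
        inner_add_left, inner_sub_left, real_inner_self_eq_norm_sq]
      ring
    linarith [hexp ▸ hsum]
  have hcs : (inner ℝ (x - y) (p - q) : ℝ) ≤ ‖x - y‖ * ‖p - q‖ := real_inner_le_norm _ _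
  rcases eq_or_lt_of_le (norm_nonneg (p - q)) with h | h
  · rw [← h]; exact norm_nonneg _
  · nlinarith

end aux

theorem stmt_5 (n : ℕ) (Y : ℕ → Set (EuclideanSpace ℝ (Fin n)))
    (hYne : ∀ k, (Y k).Nonempty) (hYcl : ∀ k, IsClosed (Y k)) (hYcv : ∀ k, Convex ℝ (Y k))
    (Φ : ℕ → EuclideanSpace ℝ (Fin n) → EuclideanSpace ℝ (Fin n))
    (η L α E σ : ℝ) (hη : 0 < η)
    (hmono : ∀ k x y, η * ‖x - y‖ ^ 2 ≤ (inner ℝ (Φ k x - Φ k y) (x - y) : ℝ))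
    (hlip : ∀ k x y, ‖Φ k x - Φ k y‖ ≤ L * ‖x - y‖)
    (proj : ℕ → EuclideanSpace ℝ (Fin n) → EuclideanSpace ℝ (Fin n))
    (hproj : ∀ k x, IsProjOn (Y k) x (proj k x))
    (zstar : ℕ → EuclideanSpace ℝ (Fin n)) (hzY : ∀ k, zstar k ∈ Y k)
    (hfix : ∀ k, proj k (zstar k - α • Φ k (zstar k)) = zstar k)
    (z e : ℕ → EuclideanSpace ℝ (Fin n))
    (hiter : ∀ k, z (k + 1) = proj k (z k - α • (Φ k (z k) + e k)))
    (hE : 0 ≤ E) (hσ : 0 ≤ σ)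
    (herr : ∀ k, ‖e k‖ ≤ E)
    (hdrift : ∀ k, ‖zstar (k + 1) - zstar k‖ ≤ σ)
    (hα0 : 0 < α) (hα : α < 2 * η / L ^ 2) :
    Filter.limsup (fun k => ‖z k - zstar k‖) Filter.atTop ≤
      (α * E + σ) / (1 - Real.sqrt (1 - 2 * α * η + α ^ 2 * L ^ 2)) := by
  -- basic facts
  have hL2 : 0 < L ^ 2 := by
    rcases eq_or_ne L 0 with h | h
    · exfalso; rw [h] at hα; simp at hα; linarith
    · positivity
  set ρ : ℝ := Real.sqrt (1 - 2 * α * η + α ^ 2 * L ^ 2) with hρdef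
  have hρ0 : 0 ≤ ρ := Real.sqrt_nonneg _
  have hρlt1 : ρ < 1 := by
    rw [hρdef, Real.sqrt_lt' one_pos]
    have hh : α * L ^ 2 < 2 * η := by
      have := (lt_div_iff₀ hL2).mp hα
      linarith
    nlinarith
  have h1ρ : 0 < 1 - ρ := by linarith
  set C : ℝ := (α * E + σ) / (1 - ρ) with hCdef
  have hC0 : 0 ≤ C := by positivity
  -- the one-step contraction of the exact map
  have hcontr : ∀ k (x y : EuclideanSpace ℝ (Fin n)),
      ‖(x - α • Φ k x) - (y - α • Φ k y)‖ ≤ ρ * ‖x - y‖ := by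
    intro k x y
    rcases eq_or_ne x y with rfl | hxy
    · simp [mul_nonneg hρ0 (norm_nonneg _)]
    -- there is a nonzero vector, hence η ≤ L
    have hηL : η ≤ L := by
      have hd : (0:ℝ) < ‖x - y‖ := by
        rw [norm_pos_iff]; exact sub_ne_zero_of_ne hxy
      have h1 := hmono k x y
      have h2 : (inner ℝ (Φ k x - Φ k y) (x - y) : ℝ) ≤ ‖Φ k x - Φ k y‖ * ‖x - y‖ :=
        real_inner_le_norm _ _
      have h3 := hlip k x y
      nlinarith [mul_le_mul_of_nonneg_right h3 hd.le, mul_pos hd hd, sq_nonneg (‖x - y‖)]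
    have hρsq : 0 ≤ 1 - 2 * α * η + α ^ 2 * L ^ 2 := by nlinarith [sq_nonneg (1 - α * L)]
    have hnormsq : ‖(x - α • Φ k x) - (y - α • Φ k y)‖ ^ 2
        ≤ (1 - 2 * α * η + α ^ 2 * L ^ 2) * ‖x - y‖ ^ 2 := by
      have heq : (x - α • Φ k x) - (y - α • Φ k y) = (x - y) - α • (Φ k x - Φ k y) := by
        rw [smul_sub]; abel
      rw [heq, norm_sub_sq_real, inner_smul_right, norm_smul, Real.norm_eq_abs,
        abs_of_pos hα0, mul_pow]
      have h1 := hmono k x y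
      have h2 := hlip k x y
      have h3 : ‖Φ k x - Φ k y‖ ^ 2 ≤ (L * ‖x - y‖) ^ 2 := by
        apply sq_le_sq' _ h2
        nlinarith [norm_nonneg (Φ k x - Φ k y)]
      have h4 : (inner ℝ (x - y) (Φ k x - Φ k y) : ℝ)
          = (inner ℝ (Φ k x - Φ k y) (x - y) : ℝ) := real_inner_comm _ _
      nlinarith
    have := Real.sqrt_le_sqrt hnormsq
    rwa [Real.sqrt_sq (norm_nonneg _), Real.sqrt_mul hρsq, Real.sqrt_sq (norm_nonneg _)]
      at this
  -- the one-step recursion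
  set d : ℕ → ℝ := fun k => ‖z k - zstar k‖ with hddef
  have hrec : ∀ k, d (k + 1) ≤ ρ * d k + (α * E + σ) := by
    intro k
    have hstep1 : d (k + 1) ≤ ‖z (k + 1) - zstar k‖ + σ := by
      calc d (k + 1) = ‖(z (k + 1) - zstar k) - (zstar (k+1) - zstar k)‖ := by
            simp only [hddef]; congr 1; abel
        _ ≤ ‖z (k + 1) - zstar k‖ + ‖zstar (k+1) - zstar k‖ := norm_sub_le _ _
        _ ≤ ‖z (k + 1) - zstar k‖ + σ := by linarith [hdrift k]
    have hstep2 : ‖z (k + 1) - zstar k‖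
        ≤ ‖(z k - α • (Φ k (z k) + e k)) - (zstar k - α • Φ k (zstar k))‖ := by
      have hne := isProjOn_nonexpansive (hYcv k)
        (hproj k (z k - α • (Φ k (z k) + e k))) (hproj k (zstar k - α • Φ k (zstar k)))
      rw [hfix k] at hne
      rw [hiter k]
      exact hne
    have hstep3 : ‖(z k - α • (Φ k (z k) + e k)) - (zstar k - α • Φ k (zstar k))‖
        ≤ ‖(z k - α • Φ k (z k)) - (zstar k - α • Φ k (zstar k))‖ + α * E := by
      have heq : (z k - α • (Φ k (z k) + e k)) - (zstar k - α • Φ k (zstar k))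
          = ((z k - α • Φ k (z k)) - (zstar k - α • Φ k (zstar k))) + (- α • e k) := by
        rw [smul_add, neg_smul]; abel
      rw [heq]
      refine (norm_add_le _ _).trans ?_
      have : ‖(-α) • e k‖ = α * ‖e k‖ := by
        rw [norm_smul, Real.norm_eq_abs, abs_neg, abs_of_pos hα0]
      rw [this]
      have := herr k
      nlinarith
    have hstep4 := hcontr k (z k) (zstar k)
    calc d (k + 1) ≤ ‖z (k + 1) - zstar k‖ + σ := hstep1
      _ ≤ ρ * d k + α * E + σ := by
          have := hstep2.trans hstep3
          simp only [hddef]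
          linarith
      _ = ρ * d k + (α * E + σ) := by ring
  -- geometric bound
  have hbound : ∀ k, d k ≤ ρ ^ k * d 0 + C := by
    intro k
    induction k with
    | zero => simp [hC0]
    | succ k ih =>
        have hd0 : 0 ≤ d 0 := norm_nonneg _
        have hCeq : ρ * C + (α * E + σ) = C := by
          have h1ρne : 1 - ρ ≠ 0 := h1ρ.ne'
          rw [hCdef]
          field_simp
          ring
        calc d (k + 1) ≤ ρ * d k + (α * E + σ) := hrec k
          _ ≤ ρ * (ρ ^ k * d 0 + C) + (α * E + σ) := by nlinarith
          _ = ρ ^ (k + 1) * d 0 + (ρ * C + (α * E + σ)) := by ring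
          _ = ρ ^ (k + 1) * d 0 + C := by rw [hCeq]
  -- limsup argument
  have hcob : Filter.IsCoboundedUnder (· ≤ ·) Filter.atTop d :=
    Filter.isCoboundedUnder_le_of_le Filter.atTop (x := 0) fun k => norm_nonneg _
  have hlim : ∀ ε > 0, Filter.limsup d Filter.atTop ≤ C + ε := by
    intro ε hε
    apply Filter.limsup_le_of_le hcob
    have htend : Filter.Tendsto (fun k => ρ ^ k * d 0) Filter.atTop (nhds 0) := by
      have := tendsto_pow_atTop_nhds_zero_of_lt_one hρ0 hρlt1
      simpa using this.mul_const (d 0)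
    have := htend.eventually (eventually_lt_nhds hε)
    filter_upwards [this] with k hk
    have := hbound k
    linarith
  have : Filter.limsup d Filter.atTop ≤ C := by
    by_contra h
    push_neg at h
    have hε : 0 < (Filter.limsup d Filter.atTop - C) / 2 := by linarith
    have := hlim _ hε
    linarith
  exact this
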